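/- With K ⊇ ℂ({z}) and σ extending σ_q as above, and l ∈ K with σl = l + 1: the only f ∈ ℂ({z})(l) nonzero with σf = cf for some c ∈ ℂ* are f = a·z^n with a ∈ ℂ*, n ∈ ℤ, and then c = q^n. -/

import Mathlib

open Polynomial

set_option maxHeartbeats 1000000
set_option synthInstance.maxHeartbeats 400000

instance : CharZero (LaurentSeries ℂ) :=
  (RingHom.charZero_iff (HahnSeries.C_injective (R := ℂ) (Γ := ℤ))).mp inferInstance

private lemma hCmul_aux (c : ℂ) (f : LaurentSeries ℂ) (m : ℤ) :
    (HahnSeries.C c * f).coeff m = c * f.coeff m := by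
  rw [HahnSeries.C_apply]
  have h := HahnSeries.coeff_single_mul_add (r := c) (x := f) (a := m) (b := (0 : ℤ))
  rwa [add_zero] at h

private lemma zpow_inj_aux {q : ℂ} (hq0 : q ≠ 0) (hq' : ∀ n : ℕ, 0 < n → q ^ n ≠ 1)
    {n k : ℤ} (h : q ^ n = q ^ k) : n = k := by
  by_contra hne
  have key : ∀ a b : ℤ, b < a → q ^ a = q ^ b → False := by
    intro a b hlt hab
    have h1 : q ^ (a - b) = 1 := by
      rw [zpow_sub₀ hq0, hab, div_self (zpow_ne_zero _ hq0)]
    have h2 : (0:ℤ) < a - b := by omega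
    have h3 : q ^ ((a - b).toNat) = 1 := by
      rw [← zpow_natCast, Int.toNat_of_nonneg h2.le]; exact h1
    exact hq' _ (by omega) h3
  rcases lt_or_gt_of_ne hne with hlt | hlt
  · exact key k n hlt h.symm
  · exact key n k hlt h

private lemma hahn_single_aux {q c : ℂ} (hq0 : q ≠ 0) (hq' : ∀ n : ℕ, 0 < n → q ^ n ≠ 1)
    {f : LaurentSeries ℂ} (hf : f ≠ 0)
    (h : ∀ n : ℤ, q ^ n * f.coeff n = c * f.coeff n) :
    ∃ m : ℤ, f.coeff m ≠ 0 ∧ f = HahnSeries.single m (f.coeff m) ∧ c = q ^ m := by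
  have hex : ∃ m : ℤ, f.coeff m ≠ 0 := by
    by_contra hxx
    push_neg at hxx
    exact hf (HahnSeries.coeff_injective (funext hxx))
  obtain ⟨m, hm⟩ := hex
  have hcm : c = q ^ m := (mul_right_cancel₀ hm (h m)).symm
  refine ⟨m, hm, ?_, hcm⟩
  apply HahnSeries.coeff_injective
  funext n
  rw [HahnSeries.coeff_single]
  split_ifs with hn
  · rw [hn]
  · by_contra hn0
    have h2 := h n
    rw [hcm] at h2
    exact hn (zpow_inj_aux hq0 hq' (mul_right_cancel₀ hn0 h2))

private lemma zpow_single_aux (m : ℤ) :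
    (HahnSeries.single (1:ℤ) (1:ℂ) : LaurentSeries ℂ) ^ m = HahnSeries.single m 1 := by
  have hnat : ∀ n : ℕ, (HahnSeries.single (1:ℤ) (1:ℂ) : LaurentSeries ℂ) ^ n
      = HahnSeries.single (n : ℤ) 1 := by
    intro n
    rw [HahnSeries.single_pow, one_pow]
    norm_num
  cases m with
  | ofNat n =>
    rw [Int.ofNat_eq_coe, zpow_natCast, hnat]
  | negSucc n =>
    rw [zpow_negSucc, hnat]
    have hmul : (HahnSeries.single ((n + 1 : ℕ) : ℤ) (1:ℂ) : LaurentSeries ℂ)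
        * HahnSeries.single (Int.negSucc n) 1 = 1 := by
      rw [HahnSeries.single_mul_single, one_mul]
      have h0 : ((n + 1 : ℕ) : ℤ) + Int.negSucc n = 0 := by
        rw [Int.negSucc_eq]; push_cast; ring
      rw [h0, HahnSeries.single_zero_one]
    exact inv_eq_of_mul_eq_one_right hmul

private lemma poly_deg_aux {q c : ℂ} (hq0 : q ≠ 0)
    (τ : LaurentSeries ℂ →+* LaurentSeries ℂ)
    (hτ : ∀ (f : LaurentSeries ℂ) (n : ℤ), (τ f).coeff n = q ^ n * f.coeff n)
    (p : Polynomial (LaurentSeries ℂ)) (hp : p ≠ 0)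
    (h : (p.map τ).comp (X + 1) = Polynomial.C (HahnSeries.C c) * p) :
    p.natDegree = 0 := by
  suffices H : ∀ d : ℕ, ∀ p : Polynomial (LaurentSeries ℂ), p.natDegree = d → p ≠ 0 →
      (p.map τ).comp (X + 1) = Polynomial.C (HahnSeries.C c) * p → p.natDegree = 0 by
    exact H _ p rfl hp h
  intro d
  induction d using Nat.strong_induction_on with
  | _ d ih =>
  intro p hpd hp h
  rcases Nat.eq_zero_or_pos d with hd | hd
  · rw [hpd, hd]
  exfalso
  -- the derivative satisfies the same equation
  have hder : ((derivative p).map τ).comp (X + 1)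
      = Polynomial.C (HahnSeries.C c) * derivative p := by
    have h2 := congrArg derivative h
    rw [derivative_comp, derivative_map, derivative_C_mul] at h2
    simpa using h2
  have hp' : derivative p ≠ 0 := by
    intro h0
    have := natDegree_eq_zero_of_derivative_eq_zero h0
    omega
  have hlt : (derivative p).natDegree < d := hpd ▸ natDegree_derivative_lt (by omega)
  have h0' : (derivative p).natDegree = 0 := ih _ hlt _ rfl hp' hder
  -- hence p has degree 1
  have hd1 : d = 1 := by
    by_contra hne
    obtain ⟨e, rfl⟩ : ∃ e, d = e + 1 := ⟨d - 1, by omega⟩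
    have he1 : 1 ≤ e := by omega
    have hcd : p.coeff (e + 1) ≠ 0 := by
      rw [← hpd]; exact mt leadingCoeff_eq_zero.mp hp
    have hcoeff : (derivative p).coeff e ≠ 0 := by
      rw [coeff_derivative]
      apply mul_ne_zero hcd
      have : ((e : LaurentSeries ℂ) + 1) ≠ 0 := Nat.cast_add_one_ne_zero e
      exact_mod_cast this
    have := le_natDegree_of_ne_zero hcoeff
    omega
  have hp1 : p.natDegree = 1 := by rw [hpd, hd1]
  -- write p = C a1 * X + C a0
  set a1 := p.coeff 1 with ha1def
  set a0 := p.coeff 0 with ha0def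
  have ha1 : a1 ≠ 0 := by
    have := mt leadingCoeff_eq_zero.mp hp
    rwa [leadingCoeff, hp1] at this
  have hrep : p = Polynomial.C a1 * X + Polynomial.C a0 :=
    eq_X_add_C_of_natDegree_le_one (le_of_eq hp1)
  rw [hrep] at h
  simp only [Polynomial.map_add, Polynomial.map_mul, map_C, map_X, add_comp, mul_comp,
    C_comp, X_comp] at h
  -- compare coefficients 1 and 0
  have e1 : τ a1 = HahnSeries.C c * a1 := by
    have h1 := congrArg (fun r => Polynomial.coeff r 1) h
    simpa [mul_add, coeff_add, coeff_C_mul, coeff_C, coeff_X] using h1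
  have e0 : τ a1 + τ a0 = HahnSeries.C c * a0 := by
    have h0 := congrArg (fun r => Polynomial.coeff r 0) h
    simpa [mul_add, coeff_add, coeff_C_mul, coeff_C, coeff_X] using h0
  obtain ⟨m, hm⟩ : ∃ m : ℤ, a1.coeff m ≠ 0 := by
    by_contra hxx
    push_neg at hxx
    exact ha1 (HahnSeries.coeff_injective (funext hxx))
  have hcq : q ^ m = c := by
    have h3 := congrArg (fun x => HahnSeries.coeff x m) e1
    rw [hτ, hCmul_aux] at h3
    exact mul_right_cancel₀ hm h3
  have h4 := congrArg (fun x => HahnSeries.coeff x m) e0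
  simp only [HahnSeries.coeff_add] at h4
  rw [hτ, hτ, hCmul_aux, ← hcq] at h4
  have h5 : q ^ m * a1.coeff m = 0 := by linear_combination h4
  rcases mul_eq_zero.mp h5 with h6 | h6
  · exact zpow_ne_zero m hq0 h6
  · exact hm h6

theorem characters_in_lq_field (q : ℂ) (hq : 1 < ‖q‖)
    (hq' : ∀ n : ℕ, 0 < n → q ^ n ≠ 1)
    (σ : RatFunc (LaurentSeries ℂ) ≃+* RatFunc (LaurentSeries ℂ))
    (hσC : ∀ f : LaurentSeries ℂ, ∃ g : LaurentSeries ℂ,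
      σ (RatFunc.C f) = RatFunc.C g ∧ ∀ n : ℤ, g.coeff n = q ^ n * f.coeff n)
    (hσX : σ RatFunc.X = RatFunc.X + 1)
    (F : RatFunc (LaurentSeries ℂ)) (hF : F ≠ 0) (c : ℂ) (hc : c ≠ 0)
    (hFc : σ F = RatFunc.C (HahnSeries.C c) * F) :
    ∃ (a : ℂ) (n : ℤ), a ≠ 0 ∧
      F = RatFunc.C (HahnSeries.C a * HahnSeries.single (1 : ℤ) (1 : ℂ) ^ n) ∧
      c = q ^ n := by
  have hq0 : q ≠ 0 := by
    intro h; rw [h] at hq; simp at hq; linarith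
  -- the coefficientwise automorphism τ of Laurent series
  have hτbase : ∀ f : LaurentSeries ℂ,
      σ (RatFunc.C f) = RatFunc.C (Classical.choose (hσC f)) ∧
      ∀ n : ℤ, (Classical.choose (hσC f)).coeff n = q ^ n * f.coeff n :=
    fun f => Classical.choose_spec (hσC f)
  have hCinj : Function.Injective (RatFunc.C : LaurentSeries ℂ →+* RatFunc (LaurentSeries ℂ)) :=
    RingHom.injective _
  let τ : LaurentSeries ℂ →+* LaurentSeries ℂ :=
    { toFun := fun f => Classical.choose (hσC f)
      map_one' := by
        apply hCinj
        rw [← (hτbase 1).1, map_one, map_one]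
      map_mul' := fun f g => by
        apply hCinj
        rw [← (hτbase (f * g)).1, map_mul, map_mul]
        exact (congrArg₂ (· * ·) (hτbase f).1 (hτbase g).1).trans (map_mul _ _ _).symm
      map_zero' := by
        apply hCinj
        rw [← (hτbase 0).1, map_zero, map_zero]
      map_add' := fun f g => by
        apply hCinj
        rw [← (hτbase (f + g)).1, map_add, map_add]
        exact (congrArg₂ (· + ·) (hτbase f).1 (hτbase g).1).trans (map_add _ _ _).symm }
  have hτC : ∀ f : LaurentSeries ℂ, σ (RatFunc.C f) = RatFunc.C (τ f) := fun f => (hτbase f).1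
  have hτ : ∀ (f : LaurentSeries ℂ) (n : ℤ), (τ f).coeff n = q ^ n * f.coeff n :=
    fun f => (hτbase f).2
  -- the induced map on polynomials
  set Sg : Polynomial (LaurentSeries ℂ) →+* Polynomial (LaurentSeries ℂ) :=
    Polynomial.eval₂RingHom (R := LaurentSeries ℂ) (S := Polynomial (LaurentSeries ℂ)) (Polynomial.C.comp τ) (Polynomial.X + 1) with hSgdef
  have hSg : ∀ p : Polynomial (LaurentSeries ℂ), Sg p = (p.map τ).comp (X + 1) := by
    intro p
    rw [hSgdef, Polynomial.coe_eval₂RingHom, Polynomial.comp, Polynomial.eval₂_map]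
  have hSgC : ∀ a : LaurentSeries ℂ, Sg (Polynomial.C a) = Polynomial.C (τ a) := fun a =>
    eval₂_C _ _
  have hSgX : Sg Polynomial.X = Polynomial.X + 1 := eval₂_X _ _
  have hX1 : (X + 1 : Polynomial (LaurentSeries ℂ)) = X + Polynomial.C 1 := by simp
  have hX1deg : (X + 1 : Polynomial (LaurentSeries ℂ)).natDegree = 1 := by
    rw [hX1]; exact natDegree_X_add_C 1
  have hdeg : ∀ p : Polynomial (LaurentSeries ℂ), (Sg p).natDegree = p.natDegree := by
    intro p
    rw [hSg, natDegree_comp, hX1deg, mul_one, natDegree_map]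
  have hlc : ∀ p : Polynomial (LaurentSeries ℂ), (Sg p).leadingCoeff = τ p.leadingCoeff := by
    intro p
    rw [hSg, leadingCoeff_comp (by rw [hX1deg]; norm_num), leadingCoeff_map]
    have hlc1 : (X + 1 : Polynomial (LaurentSeries ℂ)).leadingCoeff = 1 := by
      rw [hX1]; exact (monic_X_add_C 1).leadingCoeff
    rw [hlc1, one_pow, mul_one]
  have hSgne : ∀ p : Polynomial (LaurentSeries ℂ), p ≠ 0 → Sg p ≠ 0 := by
    intro p hp hcon
    apply hp
    have h1 := hlc p
    rw [hcon, leadingCoeff_zero] at h1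
    have h2 : p.leadingCoeff = 0 := τ.injective (by rw [← h1, map_zero])
    exact leadingCoeff_eq_zero.mp h2
  -- σ on polynomials
  have hkey : ∀ p : Polynomial (LaurentSeries ℂ),
      σ ((@algebraMap (Polynomial (LaurentSeries ℂ)) (RatFunc (LaurentSeries ℂ)) Polynomial.commSemiring _ _) p) =
        (@algebraMap (Polynomial (LaurentSeries ℂ)) (RatFunc (LaurentSeries ℂ)) Polynomial.commSemiring _ _) (Sg p) := by
    have heq : (σ : RatFunc (LaurentSeries ℂ) →+* RatFunc (LaurentSeries ℂ)).comp
        (@algebraMap (Polynomial (LaurentSeries ℂ)) (RatFunc (LaurentSeries ℂ)) Polynomial.commSemiring _ _) =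
        (@algebraMap (Polynomial (LaurentSeries ℂ)) (RatFunc (LaurentSeries ℂ)) Polynomial.commSemiring _ _).comp Sg := by
      apply Polynomial.ringHom_ext
      · intro a
        simp only [RingHom.comp_apply, RingHom.coe_coe]
        rw [RatFunc.algebraMap_C, hτC, hSgC, RatFunc.algebraMap_C]
      · simp only [RingHom.comp_apply, RingHom.coe_coe]
        rw [RatFunc.algebraMap_X, hσX, hSgX, map_add, RatFunc.algebraMap_X, map_one]
    intro p
    exact DFunLike.congr_fun heq p
  -- translate the functional equation to polynomials
  set P := F.num with hPdef
  set Q := F.denom with hQdef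
  have hP0 : P ≠ 0 := RatFunc.num_ne_zero hF
  have hQ0 : Q ≠ 0 := RatFunc.denom_ne_zero F
  have hFrep : (@algebraMap (Polynomial (LaurentSeries ℂ)) (RatFunc (LaurentSeries ℂ)) Polynomial.commSemiring _ _) P / (@algebraMap (Polynomial (LaurentSeries ℂ)) (RatFunc (LaurentSeries ℂ)) Polynomial.commSemiring _ _) Q = F :=
    RatFunc.num_div_denom F
  have hσF : (@algebraMap (Polynomial (LaurentSeries ℂ)) (RatFunc (LaurentSeries ℂ)) Polynomial.commSemiring _ _) (Sg P) / (@algebraMap (Polynomial (LaurentSeries ℂ)) (RatFunc (LaurentSeries ℂ)) Polynomial.commSemiring _ _) (Sg Q)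
      = RatFunc.C (HahnSeries.C c) * ((@algebraMap (Polynomial (LaurentSeries ℂ)) (RatFunc (LaurentSeries ℂ)) Polynomial.commSemiring _ _) P / (@algebraMap (Polynomial (LaurentSeries ℂ)) (RatFunc (LaurentSeries ℂ)) Polynomial.commSemiring _ _) Q) := by
    calc (@algebraMap (Polynomial (LaurentSeries ℂ)) (RatFunc (LaurentSeries ℂ)) Polynomial.commSemiring _ _) (Sg P) / (@algebraMap (Polynomial (LaurentSeries ℂ)) (RatFunc (LaurentSeries ℂ)) Polynomial.commSemiring _ _) (Sg Q)
        = σ ((@algebraMap (Polynomial (LaurentSeries ℂ)) (RatFunc (LaurentSeries ℂ)) Polynomial.commSemiring _ _) P / (@algebraMap (Polynomial (LaurentSeries ℂ)) (RatFunc (LaurentSeries ℂ)) Polynomial.commSemiring _ _) Q) := by rw [map_div₀, hkey, hkey]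
      _ = σ F := by rw [hFrep]
      _ = RatFunc.C (HahnSeries.C c) * F := hFc
      _ = _ := by rw [hFrep]
  have hne1 : (@algebraMap (Polynomial (LaurentSeries ℂ)) (RatFunc (LaurentSeries ℂ)) Polynomial.commSemiring _ _) (Sg Q) ≠ 0 :=
    RatFunc.algebraMap_ne_zero (hSgne Q hQ0)
  have hne2 : (@algebraMap (Polynomial (LaurentSeries ℂ)) (RatFunc (LaurentSeries ℂ)) Polynomial.commSemiring _ _) Q ≠ 0 :=
    RatFunc.algebraMap_ne_zero hQ0
  have hpoly : Sg P * Q = (Polynomial.C (HahnSeries.C c) * P) * Sg Q := by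
    apply RatFunc.algebraMap_injective (LaurentSeries ℂ)
    rw [← mul_div_assoc, div_eq_div_iff hne1 hne2] at hσF
    rw [map_mul, map_mul, map_mul, RatFunc.algebraMap_C]
    exact hσF
  -- Q divides Sg Q, hence Sg Q = Q
  have hunit : IsUnit (Polynomial.C (HahnSeries.C c) : Polynomial (LaurentSeries ℂ)) :=
    Polynomial.isUnit_C.mpr (isUnit_iff_ne_zero.mpr (HahnSeries.C_ne_zero hc))
  have hcop : IsCoprime Q (Polynomial.C (HahnSeries.C c) * P) :=
    (isCoprime_mul_unit_left_right hunit Q P).mpr (RatFunc.isCoprime_num_denom F).symm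
  have hdvd : Q ∣ Sg Q := by
    apply hcop.dvd_of_dvd_mul_left
    exact ⟨Sg P, by rw [← hpoly]; ring⟩
  have hSgQ : Sg Q = Q := by
    obtain ⟨r, hr⟩ := hdvd
    have hr0 : r ≠ 0 := fun h0 => hSgne Q hQ0 (by rw [hr, h0, mul_zero])
    have hdQ := hdeg Q
    rw [hr, natDegree_mul hQ0 hr0] at hdQ
    have hdegr : r.natDegree = 0 := by omega
    have hrC : r = Polynomial.C (r.coeff 0) := eq_C_of_natDegree_eq_zero hdegr
    have hlcQ := hlc Q
    rw [hr, hrC, leadingCoeff_mul, leadingCoeff_C, (RatFunc.monic_denom F).leadingCoeff,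
      one_mul, map_one] at hlcQ
    rw [hr, hrC, hlcQ, map_one, mul_one]
  have hSgP : Sg P = Polynomial.C (HahnSeries.C c) * P := by
    rw [hSgQ] at hpoly
    exact mul_right_cancel₀ hQ0 hpoly
  -- Q has degree 0, hence Q = 1
  have hQdeg0 : Q.natDegree = 0 := by
    apply poly_deg_aux (c := 1) hq0 τ hτ Q hQ0
    rw [← hSg, hSgQ]
    simp
  have hQ1 : Q = 1 := by
    have hQC : Q = Polynomial.C (Q.coeff 0) := eq_C_of_natDegree_eq_zero hQdeg0
    have h1 : Q.coeff 0 = 1 := by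
      have hmon := RatFunc.monic_denom F
      rwa [Polynomial.Monic, leadingCoeff, hQdeg0] at hmon
    rw [hQC, h1, map_one]
  -- P has degree 0
  have hPdeg : P.natDegree = 0 := by
    apply poly_deg_aux (c := c) hq0 τ hτ P hP0
    rw [← hSg]; exact hSgP
  have hPrep : P = Polynomial.C (P.coeff 0) := eq_C_of_natDegree_eq_zero hPdeg
  set a0 := P.coeff 0 with ha0def
  have ha00 : a0 ≠ 0 := fun h0 => hP0 (by rw [hPrep, h0, map_zero])
  have hτa0 : τ a0 = HahnSeries.C c * a0 := by
    have h1 := hSgP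
    rw [hPrep, hSgC, ← Polynomial.C_mul] at h1
    exact Polynomial.C_injective h1
  obtain ⟨m, hm, hsingle, hcq⟩ := hahn_single_aux hq0 hq' ha00 (fun n => by
    have h2 := congrArg (fun x => HahnSeries.coeff x n) hτa0
    rw [hτ, hCmul_aux] at h2
    exact h2)
  refine ⟨a0.coeff m, m, hm, ?_, hcq⟩
  have hz : (HahnSeries.single (1:ℤ) (1:ℂ) : LaurentSeries ℂ) ^ m = HahnSeries.single m 1 :=
    zpow_single_aux m
  have hCs : HahnSeries.C (a0.coeff m) * (HahnSeries.single m (1:ℂ) : LaurentSeries ℂ)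
      = HahnSeries.single m (a0.coeff m) := by
    rw [HahnSeries.C_apply, HahnSeries.single_mul_single, zero_add, mul_one]
  rw [hz, hCs, ← hsingle, ← hFrep, hQ1, hPrep, map_one, div_one, RatFunc.algebraMap_C]
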